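/- Let n ≥ 1 and m₀ > 0. For each i = 1,…,n let qᵢ, q_{i_d} ∈ ℝ³ be unit vectors and let μ_{i_d} ∈ ℝ³ satisfy μ_{i_d} = ⟨q_{i_d}, μ_{i_d}⟩ q_{i_d}. Then ‖(1/m₀) Σᵢ (⟨qᵢ, μ_{i_d}⟩qᵢ − μ_{i_d})‖ ≤ (1/m₀) Σᵢ ‖μ_{i_d}‖ · ‖e_{q_i}‖, where e_{q_i} = q_{i_d} × qᵢ. -/

import Mathlib

open Matrix BigOperators

/-- The Euclidean inner product on ℝ³. -/
noncomputable def dot3 (a b : Fin 3 → ℝ) : ℝ := ∑ i, a i * b i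

/-- The Euclidean norm on ℝ³. -/
noncomputable def norm3 (a : Fin 3 → ℝ) : ℝ := Real.sqrt (dot3 a a)

/-- The cross product on ℝ³. -/
def cross3 (a b : Fin 3 → ℝ) : Fin 3 → ℝ :=
  ![a 1 * b 2 - a 2 * b 1, a 2 * b 0 - a 0 * b 2, a 0 * b 1 - a 1 * b 0]

lemma norm3_eq (a : Fin 3 → ℝ) :
    norm3 a = ‖(WithLp.equiv 2 (Fin 3 → ℝ)).symm a‖ := by
  rw [EuclideanSpace.norm_eq]
  simp [norm3, dot3, Real.norm_eq_abs, sq_abs, sq]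

lemma dot3_nonneg (a : Fin 3 → ℝ) : 0 ≤ dot3 a a := by
  simp only [dot3]
  exact Finset.sum_nonneg fun i _ => mul_self_nonneg _

lemma dot3_expand (a b : Fin 3 → ℝ) :
    dot3 a b = a 0 * b 0 + a 1 * b 1 + a 2 * b 2 := by
  simp [dot3, Fin.sum_univ_three]

lemma lagrange (a b : Fin 3 → ℝ) :
    dot3 (cross3 a b) (cross3 a b) = dot3 a a * dot3 b b - dot3 a b * dot3 a b := by
  simp only [dot3_expand, cross3, Matrix.cons_val_zero, Matrix.cons_val_one,
    Matrix.head_cons, Matrix.cons_val_two, Matrix.tail_cons]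
  ring

lemma key (q qd μ : Fin 3 → ℝ) (hq : dot3 q q = 1) (hqd : dot3 qd qd = 1)
    (hμ : μ = dot3 qd μ • qd) :
    norm3 (dot3 q μ • q - μ) = norm3 μ * norm3 (cross3 qd q) := by
  obtain ⟨s, hs⟩ : ∃ s, μ = s • qd := ⟨_, hμ⟩
  subst hs
  have h : dot3 (dot3 q (s • qd) • q - s • qd) (dot3 q (s • qd) • q - s • qd)
      = dot3 (s • qd) (s • qd) * dot3 (cross3 qd q) (cross3 qd q) := by
    rw [lagrange]
    simp only [dot3_expand, Pi.smul_apply, Pi.sub_apply, smul_eq_mul] at *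
    set C := q 0 * qd 0 + q 1 * qd 1 + q 2 * qd 2 with hC
    linear_combination (s^2*C^2 - s^2*(qd 0 * qd 0 + qd 1 * qd 1 + qd 2 * qd 2)^2) * hq +
      (s^2*C^2 - s^2*(qd 0 * qd 0 + qd 1 * qd 1 + qd 2 * qd 2)) * hqd
  rw [norm3, h, Real.sqrt_mul (dot3_nonneg _)]
  rfl

theorem Yx_error_bound (n : ℕ) (hn : 1 ≤ n) (m₀ : ℝ) (hm₀ : 0 < m₀)
    (q qd : Fin n → (Fin 3 → ℝ))
    (hq : ∀ i, dot3 (q i) (q i) = 1) (hqd : ∀ i, dot3 (qd i) (qd i) = 1)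
    (μd : Fin n → (Fin 3 → ℝ)) (hμd : ∀ i, μd i = dot3 (qd i) (μd i) • qd i) :
    norm3 ((1 / m₀) • ∑ i, (dot3 (q i) (μd i) • q i - μd i)) ≤
      (1 / m₀) * ∑ i, norm3 (μd i) * norm3 (cross3 (qd i) (q i)) := by
  rw [norm3_eq]
  have hmap : ((WithLp.equiv 2 (Fin 3 → ℝ)).symm ((1 / m₀) • ∑ i, (dot3 (q i) (μd i) • q i - μd i)))
      = (1 / m₀) • ∑ i, (WithLp.equiv 2 (Fin 3 → ℝ)).symm (dot3 (q i) (μd i) • q i - μd i) := by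
    ext j; simp
  rw [hmap, norm_smul]
  have h1 : ‖(1 / m₀ : ℝ)‖ = 1 / m₀ := by
    rw [Real.norm_eq_abs, abs_of_pos (by positivity)]
  rw [h1]
  have h2 : ‖∑ i, (WithLp.equiv 2 (Fin 3 → ℝ)).symm (dot3 (q i) (μd i) • q i - μd i)‖
      ≤ ∑ i, norm3 (μd i) * norm3 (cross3 (qd i) (q i)) := by
    refine (norm_sum_le _ _).trans (Finset.sum_le_sum fun i _ => ?_)
    rw [← norm3_eq]
    exact le_of_eq (key (q i) (qd i) (μd i) (hq i) (hqd i) (hμd i))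
  exact mul_le_mul_of_nonneg_left h2 (by positivity)
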